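/- (Asymptotics of the upper bound on the optimal tube function.) Define s(y) := 2·arcsinh(1/sinh(y/2)) for y > 0 and arccosh(t) := log(t + √(t² − 1)) for t ≥ 1. Then the function x ↦ √x · s(arccosh(cot((π/2)/(x+2)))) tends to 2·√π as x → ∞. In particular, the paper's upper bound s(arccosh(cot((π/2)/(|χ|+2)))) on the optimal tube width d_χ for embedded complex geodesic surfaces of Euler characteristic χ is asymptotically 2√π/√|χ| as |χ| → ∞. -/

import Mathlib

open Real Filter

/-- The projection radius function `s(y) = 2 arcsinh(1/sinh(y/2))`. -/
noncomputable def sfun (y : ℝ) : ℝ := 2 * Real.arsinh (1 / Real.sinh (y / 2))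

/-- The inverse hyperbolic cosine `arccosh(t) = log(t + √(t²−1))`. -/
noncomputable def arccosh (t : ℝ) : ℝ := Real.log (t + Real.sqrt (t ^ 2 - 1))

lemma sfun_arccosh {t : ℝ} (ht : 1 < t) :
    sfun (arccosh t) = 2 * Real.arsinh (Real.sqrt (2 / (t - 1))) := by
  have ht2 : (0:ℝ) ≤ t ^ 2 - 1 := by nlinarith
  have hs : Real.sqrt (t ^ 2 - 1) ^ 2 = t ^ 2 - 1 := Real.sq_sqrt ht2
  have hsnn : 0 ≤ Real.sqrt (t ^ 2 - 1) := Real.sqrt_nonneg _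
  set a : ℝ := t + Real.sqrt (t ^ 2 - 1) with ha
  have ha1 : 1 ≤ a := by nlinarith
  have ha0 : 0 < a := by linarith
  have hainv : a⁻¹ = t - Real.sqrt (t ^ 2 - 1) := by
    have : a * (t - Real.sqrt (t ^ 2 - 1)) = 1 := by nlinarith
    field_simp
    nlinarith
  have hsa0 : 0 < Real.sqrt a := Real.sqrt_pos.2 ha0
  have hsa1 : 1 ≤ Real.sqrt a := by
    rw [show (1:ℝ) = Real.sqrt 1 by simp]
    exact Real.sqrt_le_sqrt ha1
  -- compute sinh (arccosh t / 2)
  have hlog : arccosh t / 2 = Real.log (Real.sqrt a) := by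
    rw [arccosh, Real.log_sqrt ha0.le]
  have hsinh : Real.sinh (arccosh t / 2) = (Real.sqrt a - (Real.sqrt a)⁻¹) / 2 := by
    rw [hlog, Real.sinh_log hsa0]
  have hsum : a + a⁻¹ = 2 * t := by rw [hainv]; ring
  have hS2 : ((Real.sqrt a - (Real.sqrt a)⁻¹) / 2) ^ 2 = (t - 1) / 2 := by
    have h1 : Real.sqrt a ^ 2 = a := Real.sq_sqrt ha0.le
    have h2 : Real.sqrt a * (Real.sqrt a)⁻¹ = 1 := mul_inv_cancel₀ hsa0.ne'
    have h3 : ((Real.sqrt a)⁻¹) ^ 2 = a⁻¹ := by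
      rw [← Real.sqrt_inv]
      exact Real.sq_sqrt (inv_nonneg.2 ha0.le)
    nlinarith
  have hSnn : 0 ≤ (Real.sqrt a - (Real.sqrt a)⁻¹) / 2 := by
    have : (Real.sqrt a)⁻¹ ≤ 1 := inv_le_one_of_one_le₀ hsa1
    have : (Real.sqrt a)⁻¹ ≤ Real.sqrt a := le_trans this hsa1
    linarith
  have hSval : (Real.sqrt a - (Real.sqrt a)⁻¹) / 2 = Real.sqrt ((t - 1) / 2) := by
    rw [← Real.sqrt_sq hSnn, hS2]
  have hfin : 1 / Real.sinh (arccosh t / 2) = Real.sqrt (2 / (t - 1)) := by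
    rw [hsinh, hSval, one_div, ← Real.sqrt_inv, inv_div]
  rw [sfun, hfin]

lemma tendsto_arsinh_div :
    Tendsto (fun u : ℝ => Real.arsinh u / u) (nhdsWithin 0 {(0:ℝ)}ᶜ) (nhds 1) := by
  have h := Real.hasDerivAt_arsinh 0
  rw [hasDerivAt_iff_tendsto_slope] at h
  have : ((Real.sqrt (1 + (0:ℝ) ^ 2))⁻¹ : ℝ) = 1 := by norm_num
  rw [this] at h
  refine h.congr (fun u => ?_)
  simp [slope_def_field, div_eq_inv_mul]

theorem optimal_tube_upper_bound_asymptotics :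
    Tendsto (fun x : ℝ =>
        Real.sqrt x * sfun (arccosh (Real.cot ((Real.pi / 2) / (x + 2)))))
      atTop (nhds (2 * Real.sqrt Real.pi)) := by
  set θ : ℝ → ℝ := fun x => (Real.pi / 2) / (x + 2) with hθdef
  have hθ0 : Tendsto θ atTop (nhds 0) :=
    Tendsto.div_atTop tendsto_const_nhds (tendsto_atTop_add_const_right _ 2 tendsto_id)
  have hsin : Tendsto (fun x => Real.sin (θ x)) atTop (nhds 0) := by
    have := (Real.continuous_sin.tendsto 0).comp hθ0
    simpa [Function.comp_def] using this
  have hcos : Tendsto (fun x => Real.cos (θ x)) atTop (nhds 1) := by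
    have := (Real.continuous_cos.tendsto 0).comp hθ0
    simpa [Function.comp_def] using this
  have hcs : Tendsto (fun x => Real.cos (θ x) - Real.sin (θ x)) atTop (nhds 1) := by
    simpa using hcos.sub hsin
  -- eventual facts
  have hev : ∀ᶠ x in atTop, 0 < θ x ∧ θ x < Real.pi / 4 ∧ 0 < x := by
    have h1 : ∀ᶠ x in atTop, θ x < Real.pi / 4 :=
      hθ0.eventually_lt_const (by positivity)
    have h2 : ∀ᶠ x in atTop, (0:ℝ) < x := eventually_gt_atTop 0
    filter_upwards [h1, h2] with x hx1 hx2
    refine ⟨?_, hx1, hx2⟩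
    have : (0:ℝ) < x + 2 := by linarith
    exact div_pos (by positivity) this
  -- key consequences on the event
  have hkey : ∀ x : ℝ, 0 < θ x → θ x < Real.pi / 4 →
      0 < Real.sin (θ x) ∧ Real.sin (θ x) < Real.cos (θ x) := by
    intro x h0 h4
    have hpi : Real.pi / 4 < Real.pi := by
      have := Real.pi_pos; linarith
    have hsinpos : 0 < Real.sin (θ x) :=
      Real.sin_pos_of_pos_of_lt_pi h0 (lt_trans h4 hpi)
    have h1 : Real.sin (θ x) < Real.sin (Real.pi / 4) := by
      apply Real.sin_lt_sin_of_lt_of_le_pi_div_two _ (by linarith [Real.pi_pos]) h4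
      linarith [Real.pi_pos]
    have h2 : Real.cos (Real.pi / 4) < Real.cos (θ x) :=
      Real.cos_lt_cos_of_nonneg_of_le_pi h0.le (by linarith [Real.pi_pos]) h4
    rw [Real.sin_pi_div_four] at h1
    rw [Real.cos_pi_div_four] at h2
    exact ⟨hsinpos, by linarith⟩
  set v : ℝ → ℝ := fun x => 2 * Real.sin (θ x) / (Real.cos (θ x) - Real.sin (θ x))
    with hvdef
  have hv0 : Tendsto v atTop (nhds 0) := by
    have := (hsin.const_mul 2).div hcs one_ne_zero
    simpa [hvdef, Pi.div_def] using this
  -- v is eventually positive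
  have hvpos : ∀ᶠ x in atTop, 0 < v x := by
    filter_upwards [hev] with x ⟨h0, h4, _⟩
    obtain ⟨hs1, hs2⟩ := hkey x h0 h4
    exact div_pos (by linarith) (by linarith)
  -- x * v x → π
  have hsinθ : Tendsto (fun x => Real.sin (θ x) / θ x) atTop (nhds 1) := by
    have hslope : Tendsto (fun u : ℝ => Real.sin u / u) (nhdsWithin 0 {(0:ℝ)}ᶜ)
        (nhds 1) := by
      have h := Real.hasDerivAt_sin 0
      rw [hasDerivAt_iff_tendsto_slope] at h
      rw [Real.cos_zero] at h
      refine h.congr (fun u => ?_)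
      simp [slope_def_field, div_eq_inv_mul]
    refine hslope.comp ?_
    rw [tendsto_nhdsWithin_iff]
    refine ⟨hθ0, ?_⟩
    filter_upwards [hev] with x ⟨h0, _, _⟩
    simp [h0.ne']
  have hxθ : Tendsto (fun x => x * θ x) atTop (nhds (Real.pi / 2)) := by
    have h1 : Tendsto (fun x : ℝ => 1 - 2 / (x + 2)) atTop (nhds 1) := by
      have h2 : Tendsto (fun x : ℝ => 2 / (x + 2)) atTop (nhds 0) :=
        Tendsto.div_atTop tendsto_const_nhds (tendsto_atTop_add_const_right _ 2 tendsto_id)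
      simpa using (tendsto_const_nhds (x := (1:ℝ))).sub h2
    have h3 : Tendsto (fun x : ℝ => Real.pi / 2 * (1 - 2 / (x + 2))) atTop
        (nhds (Real.pi / 2)) := by
      simpa using h1.const_mul (Real.pi / 2)
    refine h3.congr' ?_
    filter_upwards [eventually_gt_atTop (0:ℝ)] with x hx
    have hx2 : x + 2 ≠ 0 := by linarith
    simp only [hθdef]
    field_simp
    ring
  have hw : Tendsto (fun x => x * v x) atTop (nhds Real.pi) := by
    have hg : Tendsto (fun x => (x * θ x) * (Real.sin (θ x) / θ x)
        * (2 / (Real.cos (θ x) - Real.sin (θ x)))) atTop (nhds Real.pi) := by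
      have := ((hxθ.mul hsinθ).mul ((tendsto_const_nhds (x := (2:ℝ))).div hcs one_ne_zero))
      have hval : Real.pi / 2 * 1 * (2 / 1) = Real.pi := by ring
      rw [hval] at this
      exact this
    refine hg.congr' ?_
    filter_upwards [hev] with x ⟨h0, _, _⟩
    show x * θ x * (Real.sin (θ x) / θ x) * (2 / (Real.cos (θ x) - Real.sin (θ x)))
        = x * v x
    rw [hvdef]
    simp only
    set τ := θ x with hτ
    clear_value τ
    have hne : τ ≠ 0 := h0.ne'
    have h' : x * τ * (Real.sin τ / τ) = x * Real.sin τ := by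
      field_simp
    rw [h']
    ring
  -- the three limit pieces
  have h1 : Tendsto (fun x => Real.arsinh (Real.sqrt (v x)) / Real.sqrt (v x)) atTop
      (nhds 1) := by
    refine tendsto_arsinh_div.comp ?_
    rw [tendsto_nhdsWithin_iff]
    constructor
    · have := (Real.continuous_sqrt.tendsto 0).comp hv0
      simpa [Function.comp_def] using this
    · filter_upwards [hvpos] with x hx
      simp only [Set.mem_compl_iff, Set.mem_singleton_iff]
      exact (Real.sqrt_pos.2 hx).ne'
  have h2 : Tendsto (fun x => Real.sqrt (x * v x)) atTop (nhds (Real.sqrt Real.pi)) :=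
    (Real.continuous_sqrt.tendsto Real.pi).comp hw
  have hlim : Tendsto (fun x => 2 * (Real.arsinh (Real.sqrt (v x)) / Real.sqrt (v x))
      * Real.sqrt (x * v x)) atTop (nhds (2 * Real.sqrt Real.pi)) := by
    have := (h1.const_mul 2).mul h2
    simpa using this
  refine hlim.congr' ?_
  filter_upwards [hev] with x ⟨h0, h4, hx⟩
  obtain ⟨hs1, hs2⟩ := hkey x h0 h4
  have hcot : Real.cot (θ x) = Real.cos (θ x) / Real.sin (θ x) := Real.cot_eq_cos_div_sin _
  have hcot1 : 1 < Real.cot (θ x) := by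
    rw [hcot]
    rw [lt_div_iff₀ hs1]
    linarith
  have hveq : 2 / (Real.cot (θ x) - 1) = v x := by
    rw [hcot, hvdef]
    have h1' : Real.cos (θ x) / Real.sin (θ x) - 1
        = (Real.cos (θ x) - Real.sin (θ x)) / Real.sin (θ x) := by
      field_simp
    rw [h1', div_div_eq_mul_div]
  have hvx : 0 < v x := by
    rw [← hveq]; exact div_pos (by norm_num) (by linarith)
  have hsv : 0 < Real.sqrt (v x) := Real.sqrt_pos.2 hvx
  rw [sfun_arccosh hcot1, hveq]
  rw [Real.sqrt_mul hx.le]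
  field_simp
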